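/- Let (M̄, g) be an oriented, compact Riemannian 3-manifold with boundary. Then 𝓥_n(M̄) ⊆ 𝓥_P(M̄): every smooth vector field admitting a smooth vector potential normal to the boundary is divergence-free and tangent to the boundary. Moreover, 𝓥_n(M̄) = 𝓥_P(M̄) if and only if the first de Rham cohomology of M̄ vanishes: H¹_dR(M̄) = {0}. -/
import Mathlib


/-- `𝓥_n ⊆ 𝓥_P`, with equality iff `H¹_dR(M̄) = 0`.  Working (as in the paper) with
the metric-dual 1-forms, `𝓥_n` corresponds to `{ω | ω = δΩ, n(Ω) = 0}` and `𝓥_P` to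
`{ω | δω = 0, n(ω) = 0}`; `H¹_dR(M̄) = 0` means every closed 1-form is exact.  The
de Rham data of an oriented compact Riemannian 3-manifold with boundary is
axiomatised, including `δδ = 0`, the duality `n(Ω)=0 → n(δΩ)=0`, positive
definiteness of the L² product, Green's formula, the Hodge–Morrey decomposition of
divergence-free normal-free 1-forms, and the isomorphism `H¹_dR(M̄) ≅ 𝓗¹_N(M̄)`
(injectivity `hHN` and surjectivity `hHNrep` of harmonic Neumann representatives). -/
theorem Vn_subset_VP_and_eq_iff_H1_trivial {Ω0 Ω1 Ω2 bΩ1 bΩ2 : Type*}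
    [AddCommGroup Ω0] [Module ℝ Ω0] [AddCommGroup Ω1] [Module ℝ Ω1]
    [AddCommGroup Ω2] [Module ℝ Ω2] [AddCommGroup bΩ1] [Module ℝ bΩ1]
    [AddCommGroup bΩ2] [Module ℝ bΩ2]
    (d0 : Ω0 →ₗ[ℝ] Ω1) (d1 : Ω1 →ₗ[ℝ] Ω2) (δ1 : Ω1 →ₗ[ℝ] Ω0) (δ2 : Ω2 →ₗ[ℝ] Ω1)
    (n1 : Ω1 →ₗ[ℝ] bΩ1) (n2 : Ω2 →ₗ[ℝ] bΩ2)
    (inner1 : Ω1 →ₗ[ℝ] Ω1 →ₗ[ℝ] ℝ)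
    (hδδ : ∀ Ω : Ω2, δ1 (δ2 Ω) = 0)
    (hnδ : ∀ Ω : Ω2, n2 Ω = 0 → n1 (δ2 Ω) = 0)
    (posdef : ∀ α : Ω1, inner1 α α = 0 → α = 0)
    (green : ∀ (Ω : Ω2) (γ : Ω1), n2 Ω = 0 → d1 γ = 0 → inner1 (δ2 Ω) γ = 0)
    (hodgeMorrey : ∀ ω : Ω1, δ1 ω = 0 → n1 ω = 0 →
      ∃ (β : Ω2) (γ : Ω1), ω = δ2 β + γ ∧ n2 β = 0 ∧ d1 γ = 0 ∧ δ1 γ = 0 ∧ n1 γ = 0)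
    (hHN : ∀ γ : Ω1, d1 γ = 0 → δ1 γ = 0 → n1 γ = 0 → (∃ f : Ω0, d0 f = γ) → γ = 0)
    (hHNrep : ∀ ω : Ω1, d1 ω = 0 →
      ∃ (f : Ω0) (γ : Ω1), ω = d0 f + γ ∧ d1 γ = 0 ∧ δ1 γ = 0 ∧ n1 γ = 0) :
    ({ω : Ω1 | ∃ Ω : Ω2, δ2 Ω = ω ∧ n2 Ω = 0} ⊆ {ω : Ω1 | δ1 ω = 0 ∧ n1 ω = 0}) ∧
    ({ω : Ω1 | ∃ Ω : Ω2, δ2 Ω = ω ∧ n2 Ω = 0} = {ω : Ω1 | δ1 ω = 0 ∧ n1 ω = 0} ↔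
      ∀ ω : Ω1, d1 ω = 0 → ∃ f : Ω0, d0 f = ω) := by
  have hsub : ({ω : Ω1 | ∃ Ω : Ω2, δ2 Ω = ω ∧ n2 Ω = 0} ⊆ {ω : Ω1 | δ1 ω = 0 ∧ n1 ω = 0}) := by
    rintro ω ⟨Ω, rfl, hn⟩
    exact ⟨hδδ Ω, hnδ Ω hn⟩
  refine ⟨hsub, ?_, ?_⟩
  · intro heq ω hd
    obtain ⟨f, γ, hωfγ, hdγ, hδγ, hnγ⟩ := hHNrep ω hd
    have hγmem : γ ∈ {ω : Ω1 | ∃ Ω : Ω2, δ2 Ω = ω ∧ n2 Ω = 0} := by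
      rw [heq]; exact ⟨hδγ, hnγ⟩
    obtain ⟨Ω, hΩ, hnΩ⟩ := hγmem
    subst hΩ
    have hγ0 := posdef _ (green Ω _ hnΩ hdγ)
    exact ⟨f, by rw [hωfγ, hγ0, add_zero]⟩
  · intro hH1
    apply Set.Subset.antisymm hsub
    rintro ω ⟨hδω, hnω⟩
    obtain ⟨β, γ, hω, hnβ, hdγ, hδγ, hnγ⟩ := hodgeMorrey ω hδω hnω
    have hγ0 : γ = 0 := hHN γ hdγ hδγ hnγ (hH1 γ hdγ)
    exact ⟨β, by rw [hω, hγ0, add_zero], hnβ⟩
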